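/- arXiv:0808.2544 — 5 statements merged into one kernel-verified Lean document; each statement's English description precedes it below -/
import Mathlib

section
/- Let h : Σ* → Σ* be a monoid morphism on the free monoid over a finite alphabet Σ. Then there exists a positive integer m such that, setting g = h^m, for every letter a ∈ Σ and every n ≥ 1, the set of letters occurring in g^n(a) equals the set of letters occurring in g(a). -/
open FreeMonoid

/-- The set of letters occurring in a word of the free monoid. -/
def alph {α : Type*} [DecidableEq α] (w : FreeMonoid α) : Finset α :=
  (FreeMonoid.toList w).toFinset

section Aux

variable {α : Type*} [DecidableEq α]

lemma alph_one : alph (1 : FreeMonoid α) = ∅ := rfl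

lemma alph_of (a : α) : alph (FreeMonoid.of a) = {a} := rfl

lemma alph_mul (u v : FreeMonoid α) : alph (u * v) = alph u ∪ alph v := by
  simp [alph, FreeMonoid.toList_mul]

lemma alph_hom (h : FreeMonoid α →* FreeMonoid α) (w : FreeMonoid α) :
    alph (h w) = (alph w).biUnion (fun b => alph (h (FreeMonoid.of b))) := by
  induction w using FreeMonoid.recOn with
  | one => simp [alph_one]
  | of_mul x xs ih =>
      rw [map_mul, alph_mul, alph_mul, alph_of, ih]
      ext c
      simp only [Finset.mem_union, Finset.mem_biUnion, Finset.mem_singleton]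
      constructor
      · rintro (hc | ⟨b, hb, hc⟩)
        · exact ⟨x, Or.inl rfl, hc⟩
        · exact ⟨b, Or.inr hb, hc⟩
      · rintro ⟨b, (rfl | hb), hc⟩
        · exact Or.inl hc
        · exact Or.inr ⟨b, hb, hc⟩

lemma alph_iter (h : FreeMonoid α →* FreeMonoid α) (k : ℕ) (a : α) :
    alph ((⇑h)^[k] (FreeMonoid.of a)) =
      (fun S : Finset α => S.biUnion (fun b => alph (h (FreeMonoid.of b))))^[k] {a} := by
  induction k with
  | zero => simp [alph_of]
  | succ k ih =>
      rw [Function.iterate_succ_apply', Function.iterate_succ_apply', alph_hom, ih]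

end Aux

/-- For a morphism `h` of the free monoid over a finite alphabet, there is a power
`g = h^m` (`m ≥ 1`) such that for every letter `a` and every `n ≥ 1`, the set of
letters occurring in `g^n(a)` equals the set of letters occurring in `g(a)`. -/
theorem exists_power_alph_stable {α : Type*} [Fintype α] [DecidableEq α]
    (h : FreeMonoid α →* FreeMonoid α) :
    ∃ m : ℕ, 1 ≤ m ∧ ∀ (a : α) (n : ℕ), 1 ≤ n →
      alph ((⇑h)^[m * n] (FreeMonoid.of a)) = alph ((⇑h)^[m] (FreeMonoid.of a)) := by
  set T : Finset α → Finset α := fun S => S.biUnion (fun b => alph (h (FreeMonoid.of b)))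
    with hT
  -- the sequence k ↦ T^[k] is not injective (finite codomain)
  obtain ⟨i, j, hij, heq⟩ :
      ∃ i j : ℕ, i ≠ j ∧ T^[i] = T^[j] :=
    Finite.exists_ne_map_eq_of_infinite (fun k : ℕ => T^[k])
  wlog hlt : i < j generalizing i j
  · exact this j i hij.symm heq.symm (by omega)
  set p := j - i with hp
  have hp1 : 1 ≤ p := by omega
  have hper : ∀ k, i ≤ k → T^[k + p] = T^[k] := by
    intro k hk
    have h1 : k + p = (k - i) + (i + p) := by omega
    have h2 : k = (k - i) + i := by omega
    have h3 : i + p = j := by omega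
    rw [h1, h3, Function.iterate_add, ← heq, ← Function.iterate_add, ← h2]
  have hperm : ∀ t k, i ≤ k → T^[k + t * p] = T^[k] := by
    intro t
    induction t with
    | zero => simp
    | succ t ih =>
        intro k hk
        have : k + (t + 1) * p = (k + t * p) + p := by ring
        rw [this, hper _ (by omega), ih _ hk]
  refine ⟨(i + 1) * p, Nat.mul_pos (Nat.succ_pos i) hp1, ?_⟩
  intro a n hn
  rw [alph_iter, alph_iter, ← hT]
  obtain ⟨k, rfl⟩ : ∃ k, n = k + 1 := ⟨n - 1, (Nat.succ_pred_eq_of_pos hn).symm⟩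
  have hm : (i + 1) * p * (k + 1) = (i + 1) * p + ((i + 1) * k) * p := by ring
  have hi : i ≤ (i + 1) * p := le_trans (Nat.le_succ i) (Nat.le_mul_of_pos_right _ hp1)
  rw [hm, hperm _ _ hi]
end

section
/- Let b ≥ 2 be an integer and let (n_j)_{j≥1} be a strictly increasing sequence of positive integers with n_{j+1} ≥ 2·n_j for all j. Let ξ = Σ_{j≥1} b^{−n_j} and let μ(ξ) be the irrationality exponent of ξ. Then μ(ξ) ≥ limsup_{j→∞} n_{j+1}/n_j. -/
open Filter

/-- Lower bound for the irrationality exponent of a lacunary series: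
`μ(ξ) ≥ limsup n_{j+1}/n_j`, expressed as: for every real `μ` below this limsup,
there are infinitely many rational solutions `p/q` of `|ξ - p/q| < 1/q^μ`. -/
theorem irrationality_exponent_lower_bound (b : ℕ) (hb : 2 ≤ b) (n : ℕ → ℕ)
    (hmono : StrictMono n) (hpos : ∀ j, 0 < n j) (hlac : ∀ j, 2 * n j ≤ n (j + 1)) :
    ∀ μ : ℝ, (μ : EReal) < limsup (fun j => (((n (j + 1) : ℝ) / (n j : ℝ) : ℝ) : EReal)) atTop →
      {pq : ℤ × ℕ | 0 < pq.2 ∧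
        |(∑' j : ℕ, ((b : ℝ) ^ (n j))⁻¹) - (pq.1 : ℝ) / (pq.2 : ℝ)| <
          1 / (pq.2 : ℝ) ^ μ}.Infinite := by
  intro μ hμ
  have hb2 : (2:ℝ) ≤ (b:ℝ) := by exact_mod_cast hb
  have hb1 : (1:ℝ) < b := lt_of_lt_of_le one_lt_two hb2
  have hb0 : (0:ℝ) < b := lt_trans one_pos hb1
  -- summability
  have hnj : ∀ j, j ≤ n j := fun j => (hmono.id_le j)
  have hsum : Summable (fun j => ((b : ℝ) ^ (n j))⁻¹) := by
    apply Summable.of_nonneg_of_le (fun j => by positivity) (fun j => ?_)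
      ((summable_geometric_of_lt_one (by norm_num) (by norm_num) :
        Summable fun j : ℕ => ((2:ℝ)⁻¹) ^ j))
    rw [inv_pow]
    apply inv_anti₀ (by positivity)
    calc (2:ℝ) ^ j ≤ (2:ℝ) ^ (n j) := by
          apply pow_le_pow_right₀ one_le_two (hnj j)
      _ ≤ (b:ℝ) ^ (n j) := by
          apply pow_le_pow_left₀ (by norm_num) hb2
  set ξ := ∑' j : ℕ, ((b : ℝ) ^ (n j))⁻¹ with hξ
  -- pick μ' between μ and the limsup
  obtain ⟨c, hc1, hc2⟩ := exists_between hμ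
  have hctop : c ≠ ⊤ := (lt_of_lt_of_le hc2 le_top).ne
  have hcbot : c ≠ ⊥ := (lt_trans (bot_lt_iff_ne_bot.mpr (EReal.coe_ne_bot μ)) hc1).ne'
  set μ' : ℝ := c.toReal with hμ'def
  have hc : (μ' : EReal) = c := EReal.coe_toReal hctop hcbot
  have hμμ' : μ < μ' := by exact_mod_cast hc ▸ hc1
  have hfreq : ∃ᶠ J in atTop, μ' < (n (J+1) : ℝ) / (n J : ℝ) := by
    have := Filter.frequently_lt_of_lt_limsup (by isBoundedDefault) (hc ▸ hc2)
    exact this.mono (fun J hJ => by exact_mod_cast hJ)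
  have hev : ∀ᶠ J in atTop, 1 < (μ' - μ) * (n J : ℝ) := by
    have h1 : Tendsto (fun J => ((n J : ℝ))) atTop atTop :=
      tendsto_natCast_atTop_atTop.comp hmono.tendsto_atTop
    have h2 : Tendsto (fun J => (μ' - μ) * (n J : ℝ)) atTop atTop :=
      h1.const_mul_atTop (by linarith)
    exact h2.eventually_gt_atTop 1
  have hS : {J : ℕ | μ' < (n (J+1) : ℝ) / (n J : ℝ) ∧ 1 < (μ' - μ) * (n J : ℝ)}.Infinite := by
    rw [← Nat.frequently_atTop_iff_infinite]
    exact hfreq.and_eventually hev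
  -- the map J ↦ (p J, q J)
  set p : ℕ → ℤ := fun J => ∑ j ∈ Finset.range (J+1), (b : ℤ) ^ (n J - n j) with hp
  set F : ℕ → ℤ × ℕ := fun J => (p J, b ^ (n J)) with hF
  have hinjOn : Set.InjOn F {J : ℕ | μ' < (n (J+1) : ℝ) / (n J : ℝ) ∧ 1 < (μ' - μ) * (n J : ℝ)} := by
    intro J1 _ J2 _ hEq
    have : b ^ (n J1) = b ^ (n J2) := congrArg Prod.snd hEq
    exact hmono.injective (Nat.pow_right_injective hb this)
  have hmem : ∀ J ∈ {J : ℕ | μ' < (n (J+1) : ℝ) / (n J : ℝ) ∧ 1 < (μ' - μ) * (n J : ℝ)},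
      F J ∈ {pq : ℤ × ℕ | 0 < pq.2 ∧
        |ξ - (pq.1 : ℝ) / (pq.2 : ℝ)| < 1 / (pq.2 : ℝ) ^ μ} := by
    intro J hJ
    obtain ⟨hJ1, hJ2⟩ := hJ
    simp only [Set.mem_setOf_eq, hF]
    constructor
    · positivity
    -- partial sum identity
    have hq : ((b ^ (n J) : ℕ) : ℝ) = (b:ℝ) ^ (n J) := by push_cast; ring
    have hpart : ((p J : ℝ)) / ((b ^ (n J) : ℕ) : ℝ)
        = ∑ j ∈ Finset.range (J+1), ((b:ℝ) ^ (n j))⁻¹ := by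
      rw [hq, hp]
      push_cast
      rw [Finset.sum_div]
      apply Finset.sum_congr rfl
      intro j hj
      have hjJ : n j ≤ n J := hmono.monotone (by
        simp only [Finset.mem_range] at hj; omega)
      have hbpow : (b:ℝ) ^ (n J) = (b:ℝ) ^ (n J - n j) * (b:ℝ) ^ (n j) := by
        rw [← pow_add]; congr 1; omega
      rw [hbpow, div_mul_eq_div_div]
      rw [div_self (by positivity), one_div]
    have htail : ξ - ((p J : ℝ)) / ((b ^ (n J) : ℕ) : ℝ)
        = ∑' i : ℕ, ((b:ℝ) ^ (n (i + (J+1))))⁻¹ := by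
      rw [hpart, hξ, ← Summable.sum_add_tsum_nat_add (J+1) hsum]
      ring
    have hsum' : Summable (fun i : ℕ => ((b:ℝ) ^ (n (i + (J+1))))⁻¹) :=
      ((summable_nat_add_iff (f := fun j => ((b:ℝ) ^ (n j))⁻¹) (J+1)).mpr hsum)
    have htpos : 0 < ∑' i : ℕ, ((b:ℝ) ^ (n (i + (J+1))))⁻¹ :=
      Summable.tsum_pos hsum' (fun i => by positivity) 0 (by positivity)
    -- tail bound
    have hnadd : ∀ i K, n K + i ≤ n (i + K) := by
      intro i K
      induction i with
      | zero => simp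
      | succ k ih =>
          have h1 : n (k + K) < n (k + 1 + K) := hmono (by omega)
          omega
    have hgeo : Summable (fun i : ℕ => ((b:ℝ) ^ (n (J+1)))⁻¹ * ((b:ℝ)⁻¹) ^ i) := by
      apply Summable.mul_left
      exact summable_geometric_of_lt_one (by positivity) (inv_lt_one_of_one_lt₀ hb1)
    have hbound : (∑' i : ℕ, ((b:ℝ) ^ (n (i + (J+1))))⁻¹)
        ≤ 2 * ((b:ℝ) ^ (n (J+1)))⁻¹ := by
      have h1 : (∑' i : ℕ, ((b:ℝ) ^ (n (i + (J+1))))⁻¹)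
          ≤ ∑' i : ℕ, ((b:ℝ) ^ (n (J+1)))⁻¹ * ((b:ℝ)⁻¹) ^ i := by
        apply Summable.tsum_le_tsum _ hsum' hgeo
        intro i
        rw [inv_pow, ← mul_inv, ← pow_add]
        apply inv_anti₀ (by positivity)
        apply pow_le_pow_right₀ (le_of_lt hb1) (hnadd i (J+1))
      have h2 : ∑' i : ℕ, ((b:ℝ) ^ (n (J+1)))⁻¹ * ((b:ℝ)⁻¹) ^ i
          = ((b:ℝ) ^ (n (J+1)))⁻¹ * (1 - (b:ℝ)⁻¹)⁻¹ := by
        rw [tsum_mul_left, tsum_geometric_of_lt_one (by positivity) (inv_lt_one_of_one_lt₀ hb1)]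
      have h3 : (1 - (b:ℝ)⁻¹)⁻¹ ≤ 2 := by
        rw [inv_le_comm₀ (by rw [sub_pos]; exact inv_lt_one_of_one_lt₀ hb1) (by norm_num)]
        have : (b:ℝ)⁻¹ ≤ 2⁻¹ := by
          apply inv_anti₀ (by norm_num) hb2
        linarith
      calc (∑' i : ℕ, ((b:ℝ) ^ (n (i + (J+1))))⁻¹)
          ≤ ((b:ℝ) ^ (n (J+1)))⁻¹ * (1 - (b:ℝ)⁻¹)⁻¹ := h1.trans (le_of_eq h2)
        _ ≤ ((b:ℝ) ^ (n (J+1)))⁻¹ * 2 := by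
            apply mul_le_mul_of_nonneg_left h3 (by positivity)
        _ = 2 * ((b:ℝ) ^ (n (J+1)))⁻¹ := by ring
    -- final strict inequality
    have hnJ0 : (0:ℝ) < (n J : ℝ) := by exact_mod_cast hpos J
    have hratio : μ' * (n J : ℝ) < (n (J+1) : ℝ) := by
      rw [lt_div_iff₀ hnJ0] at hJ1
      linarith [hJ1]
    have key : (2:ℝ) < (b:ℝ) ^ ((n (J+1) : ℝ) - (n J : ℝ) * μ) := by
      have ht1 : 1 < (n (J+1) : ℝ) - (n J : ℝ) * μ := by nlinarith
      calc (2:ℝ) = (2:ℝ) ^ (1:ℝ) := (Real.rpow_one 2).symm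
        _ < (2:ℝ) ^ ((n (J+1) : ℝ) - (n J : ℝ) * μ) :=
            (Real.rpow_lt_rpow_left_iff one_lt_two).mpr ht1
        _ ≤ (b:ℝ) ^ ((n (J+1) : ℝ) - (n J : ℝ) * μ) :=
            Real.rpow_le_rpow (by norm_num) hb2 (by linarith)
    have hfinal : 2 * ((b:ℝ) ^ (n (J+1)))⁻¹ < 1 / ((b ^ (n J) : ℕ) : ℝ) ^ μ := by
      rw [hq, ← Real.rpow_natCast (b:ℝ) (n J), ← Real.rpow_mul hb0.le,
        ← Real.rpow_natCast (b:ℝ) (n (J+1)), ← Real.rpow_neg hb0.le, one_div,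
        ← Real.rpow_neg hb0.le]
      calc 2 * (b:ℝ) ^ (-((n (J+1):ℕ):ℝ))
          < (b:ℝ) ^ ((n (J+1):ℝ) - (n J:ℝ)*μ) * (b:ℝ) ^ (-((n (J+1):ℕ):ℝ)) :=
            mul_lt_mul_of_pos_right key (Real.rpow_pos_of_pos hb0 _)
        _ = (b:ℝ) ^ (-((n J:ℝ) * μ)) := by
            rw [← Real.rpow_add hb0]; congr 1; push_cast; ring
    rw [abs_of_pos (by rw [htail]; exact htpos)]
    calc ξ - ((p J : ℝ)) / ((b ^ (n J) : ℕ) : ℝ)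
        = ∑' i : ℕ, ((b:ℝ) ^ (n (i + (J+1))))⁻¹ := htail
      _ ≤ 2 * ((b:ℝ) ^ (n (J+1)))⁻¹ := hbound
      _ < 1 / ((b ^ (n J) : ℕ) : ℝ) ^ μ := hfinal
  exact (hS.image hinjOn).mono (Set.image_subset_iff.mpr hmem)
end

section
/- For every integer b ≥ 2 and every irrational real number ξ, the exponents satisfy v'_b(ξ) ≥ v_b(ξ) ≥ 0, and μ(ξ) ≥ 1 + max{v'_b(ξ), 1} ≥ 1 + max{v_b(ξ), 1}. -/
open Filter Set

/-- Distance from a real number to the nearest integer. -/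
noncomputable def distNearestInt (x : ℝ) : ℝ := |x - round x|

/-- The exponent `v_b(ξ)`: supremum (in `EReal`) of the real numbers `v` such that
`‖b^n ξ‖ < (b^n)^{-v}` has infinitely many solutions in positive integers `n`. -/
noncomputable def vb (b : ℕ) (ξ : ℝ) : EReal :=
  sSup ((fun v : ℝ => (v : EReal)) ''
    {v : ℝ | {n : ℕ | 0 < n ∧ distNearestInt ((b : ℝ) ^ n * ξ) < ((b : ℝ) ^ n) ^ (-v)}.Infinite})

/-- The exponent `v'_b(ξ)`: supremum (in `EReal`) of the real numbers `v` such that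
`‖b^r (b^s - 1) ξ‖ < (b^{r+s})^{-v}` has infinitely many solutions in positive integers `r, s`. -/
noncomputable def vb' (b : ℕ) (ξ : ℝ) : EReal :=
  sSup ((fun v : ℝ => (v : EReal)) ''
    {v : ℝ | {rs : ℕ × ℕ | 0 < rs.1 ∧ 0 < rs.2 ∧
        distNearestInt ((b : ℝ) ^ rs.1 * ((b : ℝ) ^ rs.2 - 1) * ξ) <
          ((b : ℝ) ^ (rs.1 + rs.2)) ^ (-v)}.Infinite})

/-- The irrationality exponent `μ(ξ)`: supremum (in `EReal`) of the real numbers `μ` such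
that `|ξ - p/q| < 1/q^μ` has infinitely many rational solutions `p/q`. -/
noncomputable def irrationalityExponent (ξ : ℝ) : EReal :=
  sSup ((fun v : ℝ => (v : EReal)) ''
    {μ : ℝ | {pq : ℤ × ℕ | 0 < pq.2 ∧
        |ξ - (pq.1 : ℝ) / (pq.2 : ℝ)| < 1 / (pq.2 : ℝ) ^ μ}.Infinite})

/-- The distance to the nearest integer is at most the distance to any integer. -/
lemma distNearestInt_le_abs_sub_int (x : ℝ) (m : ℤ) : distNearestInt x ≤ |x - m| := by
  unfold distNearestInt
  rcases eq_or_ne (round x) m with h | h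
  · rw [h]
  · have h1 : (1 : ℝ) ≤ |(round x : ℝ) - m| := by
      have h1' : (1 : ℤ) ≤ |round x - m| := Int.one_le_abs (sub_ne_zero.mpr h)
      calc (1 : ℝ) = ((1 : ℤ) : ℝ) := by norm_num
        _ ≤ ((|round x - m| : ℤ) : ℝ) := by exact_mod_cast h1'
        _ = |(round x : ℝ) - m| := by push_cast; ring_nf
    have h2 : |x - round x| ≤ 1 / 2 := abs_sub_round x
    have h3 : |(round x : ℝ) - m| ≤ |(round x : ℝ) - x| + |x - m| := abs_sub_le _ _ _
    have h4 : |(round x : ℝ) - x| = |x - round x| := abs_sub_comm _ _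
    linarith

lemma distNearestInt_nat_mul_le (k : ℕ) (x : ℝ) :
    distNearestInt ((k : ℝ) * x) ≤ (k : ℝ) * distNearestInt x := by
  calc distNearestInt ((k : ℝ) * x) ≤ |(k : ℝ) * x - ((k * round x : ℤ) : ℝ)| :=
        distNearestInt_le_abs_sub_int _ _
    _ = (k : ℝ) * |x - round x| := by
        push_cast
        rw [← mul_sub, abs_mul, abs_of_nonneg (by positivity : (0:ℝ) ≤ (k:ℝ))]
    _ = (k : ℝ) * distNearestInt x := rfl

lemma distNearestInt_lt_one (x : ℝ) : distNearestInt x < 1 :=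
  lt_of_le_of_lt (abs_sub_round x) (by norm_num)

/-- For every integer `b ≥ 2` and irrational `ξ`:
`v'_b(ξ) ≥ v_b(ξ) ≥ 0` and `μ(ξ) ≥ 1 + max(v'_b(ξ),1) ≥ 1 + max(v_b(ξ),1)`. -/
theorem exponents_inequalities (b : ℕ) (hb : 2 ≤ b) (ξ : ℝ) (hξ : Irrational ξ) :
    0 ≤ vb b ξ ∧ vb b ξ ≤ vb' b ξ ∧
    1 + max (vb b ξ) 1 ≤ 1 + max (vb' b ξ) 1 ∧
    1 + max (vb' b ξ) 1 ≤ irrationalityExponent ξ := by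
  have hb1 : (1 : ℝ) < (b : ℝ) := by exact_mod_cast lt_of_lt_of_le one_lt_two hb
  have hb0 : (0 : ℝ) < (b : ℝ) := lt_trans one_pos hb1
  -- Part A : 0 ≤ vb
  have hA : 0 ≤ vb b ξ := by
    have hsub : Set.Ioi 0 ⊆ {n : ℕ | 0 < n ∧
        distNearestInt ((b : ℝ) ^ n * ξ) < ((b : ℝ) ^ n) ^ (-(0:ℝ))} := by
      intro n hn
      refine ⟨hn, ?_⟩
      rw [neg_zero, Real.rpow_zero]
      exact distNearestInt_lt_one _
    have hmem : (0 : ℝ) ∈ {v : ℝ | {n : ℕ | 0 < n ∧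
        distNearestInt ((b : ℝ) ^ n * ξ) < ((b : ℝ) ^ n) ^ (-v)}.Infinite} :=
      Set.Infinite.mono hsub (Set.Ioi_infinite 0)
    have := le_sSup (s := ((fun v : ℝ => (v : EReal)) ''
      {v : ℝ | {n : ℕ | 0 < n ∧ distNearestInt ((b : ℝ) ^ n * ξ) < ((b : ℝ) ^ n) ^ (-v)}.Infinite}))
      (a := ((0 : ℝ) : EReal)) ⟨0, hmem, rfl⟩
    simp only [EReal.coe_zero] at this; exact this
  -- Part B : vb ≤ vb'
  have hB : vb b ξ ≤ vb' b ξ := by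
    apply sSup_le
    rintro _ ⟨v, hv, rfl⟩
    by_contra hcon
    push_neg at hcon
    obtain ⟨w, hw1, hw2⟩ := EReal.exists_between_coe_real hcon
    have hwv : w < v := by exact_mod_cast hw2
    have hmem : {rs : ℕ × ℕ | 0 < rs.1 ∧ 0 < rs.2 ∧
        distNearestInt ((b : ℝ) ^ rs.1 * ((b : ℝ) ^ rs.2 - 1) * ξ) <
          ((b : ℝ) ^ (rs.1 + rs.2)) ^ (-w)}.Infinite := by
      obtain ⟨N, hN⟩ := exists_nat_ge ((1 + w) / (v - w))
      set S : Set ℕ := {n : ℕ | 0 < n ∧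
        distNearestInt ((b : ℝ) ^ n * ξ) < ((b : ℝ) ^ n) ^ (-v)} with hS
      have hA' : (S \ {n : ℕ | n < N}).Infinite :=
        hv.diff (Set.finite_lt_nat N)
      have himg : ((fun n : ℕ => ((n, 1) : ℕ × ℕ)) '' (S \ {n : ℕ | n < N})).Infinite :=
        hA'.image (fun a _ a' _ h => (Prod.ext_iff.mp h).1)
      apply himg.mono
      rintro _ ⟨n, ⟨⟨hn0, hdist⟩, hnN⟩, rfl⟩
      simp only [Set.mem_setOf_eq, not_lt] at hnN
      refine ⟨hn0, one_pos, ?_⟩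
      have hnv : 1 + w ≤ (n : ℝ) * (v - w) := by
        have h1 : (1 + w) ≤ (N : ℝ) * (v - w) := by
          rw [div_le_iff₀ (by linarith)] at hN
          linarith
        have h2 : (N : ℝ) * (v - w) ≤ (n : ℝ) * (v - w) := by
          apply mul_le_mul_of_nonneg_right _ (by linarith)
          exact_mod_cast hnN
        linarith
      have key : (b : ℝ) ^ n * ((b : ℝ) ^ 1 - 1) * ξ = ((b - 1 : ℕ) : ℝ) * ((b : ℝ) ^ n * ξ) := by
        have : ((b - 1 : ℕ) : ℝ) = (b : ℝ) - 1 := by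
          push_cast [Nat.cast_sub (le_trans one_le_two hb)]; ring
        rw [this]; ring
      rw [key]
      have e1 : ((b : ℝ) ^ n) ^ (-v) = (b : ℝ) ^ ((n : ℝ) * (-v)) := by
        rw [← Real.rpow_natCast (b : ℝ) n, ← Real.rpow_mul hb0.le]
      have e2 : ((b : ℝ) ^ (n + 1)) ^ (-w) = (b : ℝ) ^ (((n + 1 : ℕ) : ℝ) * (-w)) := by
        rw [← Real.rpow_natCast (b : ℝ) (n + 1), ← Real.rpow_mul hb0.le]
      have e3 : (b : ℝ) * (b : ℝ) ^ ((n : ℝ) * (-v)) = (b : ℝ) ^ (1 + (n : ℝ) * (-v)) := by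
        rw [Real.rpow_add hb0, Real.rpow_one]
      calc distNearestInt (((b - 1 : ℕ) : ℝ) * ((b : ℝ) ^ n * ξ))
          ≤ ((b - 1 : ℕ) : ℝ) * distNearestInt ((b : ℝ) ^ n * ξ) :=
            distNearestInt_nat_mul_le _ _
        _ < ((b - 1 : ℕ) : ℝ) * ((b : ℝ) ^ n) ^ (-v) := by
            apply mul_lt_mul_of_pos_left hdist
            have h5 : (1 : ℕ) ≤ b - 1 := by omega
            exact_mod_cast lt_of_lt_of_le zero_lt_one (by exact_mod_cast h5)
        _ ≤ (b : ℝ) * ((b : ℝ) ^ n) ^ (-v) := by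
            apply mul_le_mul_of_nonneg_right _ (le_of_lt (Real.rpow_pos_of_pos (by positivity) _))
            have h6 : ((b - 1 : ℕ) : ℝ) ≤ ((b : ℕ) : ℝ) := by exact_mod_cast Nat.sub_le b 1
            exact h6
        _ ≤ ((b : ℝ) ^ (n + 1)) ^ (-w) := by
            rw [e1, e2, e3, Real.rpow_le_rpow_left_iff hb1]
            push_cast
            nlinarith
    have hle : ((w : ℝ) : EReal) ≤ vb' b ξ := le_sSup ⟨w, hmem, rfl⟩
    exact absurd (lt_of_le_of_lt hle hw1) (lt_irrefl _)
  -- 2 ≤ μ (Dirichlet)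
  have h2 : ((2 : ℝ) : EReal) ≤ irrationalityExponent ξ := by
    have hmem : {pq : ℤ × ℕ | 0 < pq.2 ∧
        |ξ - (pq.1 : ℝ) / (pq.2 : ℝ)| < 1 / (pq.2 : ℝ) ^ (2 : ℝ)}.Infinite := by
      have hD := Real.infinite_rat_abs_sub_lt_one_div_den_sq_of_irrational hξ
      have himg : ((fun q : ℚ => ((q.num, q.den) : ℤ × ℕ)) ''
          {q : ℚ | |ξ - (q : ℝ)| < 1 / (q.den : ℝ) ^ 2}).Infinite := by
        apply hD.image
        intro a _ a' _ h
        simp only [Prod.mk.injEq] at h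
        exact Rat.ext h.1 h.2
      apply himg.mono
      rintro _ ⟨q, hq, rfl⟩
      refine ⟨q.pos, ?_⟩
      have hden : ((q.den : ℝ)) ^ (2 : ℝ) = ((q.den : ℝ)) ^ (2 : ℕ) := by
        rw [← Real.rpow_natCast]; norm_num
      rw [hden]
      have hcast : (q : ℝ) = (q.num : ℝ) / (q.den : ℝ) := by rw [Rat.cast_def]
      rw [← hcast]
      exact hq
    exact le_sSup ⟨2, hmem, rfl⟩
  -- key step for part D
  have hkey : ∀ v : ℝ, 1 < v → {rs : ℕ × ℕ | 0 < rs.1 ∧ 0 < rs.2 ∧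
      distNearestInt ((b : ℝ) ^ rs.1 * ((b : ℝ) ^ rs.2 - 1) * ξ) <
        ((b : ℝ) ^ (rs.1 + rs.2)) ^ (-v)}.Infinite →
      ((1 + v : ℝ) : EReal) ≤ irrationalityExponent ξ := by
    intro v hv1 hinf
    have hmem : {pq : ℤ × ℕ | 0 < pq.2 ∧
        |ξ - (pq.1 : ℝ) / (pq.2 : ℝ)| < 1 / (pq.2 : ℝ) ^ (1 + v)}.Infinite := by
      by_contra hfin
      rw [Set.not_infinite] at hfin
      obtain ⟨M, hM⟩ := (hfin.image Prod.snd).bddAbove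
      -- find a solution with a large denominator
      have hnotsub : ¬ ({rs : ℕ × ℕ | 0 < rs.1 ∧ 0 < rs.2 ∧
          distNearestInt ((b : ℝ) ^ rs.1 * ((b : ℝ) ^ rs.2 - 1) * ξ) <
            ((b : ℝ) ^ (rs.1 + rs.2)) ^ (-v)} ⊆ (Set.Iic M ×ˢ Set.Iic M)) := by
        intro hsub
        exact (((Set.finite_Iic M).prod (Set.finite_Iic M)).subset hsub).not_infinite hinf
      obtain ⟨⟨r, s⟩, hrs, hout⟩ := Set.not_subset.mp hnotsub
      obtain ⟨hr0, hs0, hdist⟩ := hrs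
      simp only [Set.mem_prod, Set.mem_Iic, not_and_or, not_le] at hout
      -- the denominator
      set q : ℕ := b ^ r * (b ^ s - 1) with hqdef
      have hbs2 : 2 ≤ b ^ s := le_trans hb (Nat.le_self_pow (by omega) b)
      have hbs1 : 1 ≤ b ^ s - 1 := by omega
      have hq0 : 0 < q := Nat.mul_pos (Nat.pow_pos (show 0 < b by omega)) (by omega)
      have hMq : M < q := by
        rcases hout with hr | hs
        · calc M < r := hr
            _ < 2 ^ r := Nat.lt_two_pow_self
            _ ≤ b ^ r := Nat.pow_le_pow_left hb r
            _ ≤ q := Nat.le_mul_of_pos_right _ (by omega)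
        · calc M < s := hs
            _ ≤ 2 ^ s - 1 := by have : s < 2 ^ s := Nat.lt_two_pow_self; omega
            _ ≤ b ^ s - 1 := by have := Nat.pow_le_pow_left hb s; omega
            _ ≤ q := Nat.le_mul_of_pos_left _ (Nat.pow_pos (show 0 < b by omega))
      -- q as a real number
      have hqR : (0 : ℝ) < (q : ℝ) := by exact_mod_cast hq0
      have hcast : ((q : ℕ) : ℝ) = (b : ℝ) ^ r * ((b : ℝ) ^ s - 1) := by
        rw [hqdef, Nat.cast_mul, Nat.cast_sub (by omega : 1 ≤ b ^ s), Nat.cast_pow,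
          Nat.cast_pow, Nat.cast_one]
      have hdist' : distNearestInt ((q : ℝ) * ξ) < ((b : ℝ) ^ (r + s)) ^ (-v) := by
        rw [hcast]; exact hdist
      set p : ℤ := round ((q : ℝ) * ξ) with hpdef
      have hqle : (q : ℝ) ≤ (b : ℝ) ^ (r + s) := by
        rw [hcast, pow_add]
        have h7 : (b : ℝ) ^ s - 1 ≤ (b : ℝ) ^ s := by linarith
        have h8 : (0 : ℝ) ≤ (b : ℝ) ^ r := by positivity
        nlinarith
      have hexp : ((b : ℝ) ^ (r + s)) ^ (-v) ≤ (q : ℝ) ^ (-v) := by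
        rw [Real.rpow_neg (by positivity), Real.rpow_neg hqR.le]
        apply inv_anti₀ (Real.rpow_pos_of_pos hqR v)
        exact Real.rpow_le_rpow hqR.le hqle (by linarith)
      -- membership of (p, q)
      have hmemT : ((p, q) : ℤ × ℕ) ∈ {pq : ℤ × ℕ | 0 < pq.2 ∧
          |ξ - (pq.1 : ℝ) / (pq.2 : ℝ)| < 1 / (pq.2 : ℝ) ^ (1 + v)} := by
        refine ⟨hq0, ?_⟩
        have heq : ξ - (p : ℝ) / (q : ℝ) = ((q : ℝ) * ξ - p) / (q : ℝ) := by
          field_simp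
        rw [heq, abs_div, abs_of_pos hqR]
        have hd : |(q : ℝ) * ξ - (p : ℝ)| = distNearestInt ((q : ℝ) * ξ) := rfl
        rw [hd]
        have h9 : distNearestInt ((q : ℝ) * ξ) / (q : ℝ) <
            ((b : ℝ) ^ (r + s)) ^ (-v) / (q : ℝ) := div_lt_div_of_pos_right hdist' hqR
        have h10 : ((b : ℝ) ^ (r + s)) ^ (-v) / (q : ℝ) ≤ (q : ℝ) ^ (-v) / (q : ℝ) := by
          gcongr
        have h11 : (q : ℝ) ^ (-v) / (q : ℝ) = 1 / (q : ℝ) ^ (1 + v) := by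
          rw [Real.rpow_neg hqR.le, Real.rpow_add hqR, Real.rpow_one]
          field_simp
        linarith
      have := hM (Set.mem_image_of_mem Prod.snd hmemT)
      simp only at this
      omega
    exact le_sSup ⟨1 + v, hmem, rfl⟩
  -- assembling part D
  have hD : 1 + max (vb' b ξ) 1 ≤ irrationalityExponent ξ := by
    rcases le_or_gt (vb' b ξ) 1 with hc | hc
    · rw [max_eq_right hc]
      calc (1 : EReal) + 1 = ((2 : ℝ) : EReal) := by
            rw [← EReal.coe_one, ← EReal.coe_add]; norm_num
        _ ≤ _ := h2
    · rw [max_eq_left hc.le]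
      by_contra hcon
      push_neg at hcon
      obtain ⟨x, hx1, hx2⟩ := EReal.exists_between_coe_real hcon
      rcases le_or_gt ((x : ℝ) : EReal) ((2 : ℝ) : EReal) with hx3 | hx3
      · exact absurd (lt_of_lt_of_le hx1 (le_trans hx3 h2)) (lt_irrefl _)
      · have hx2' : ((x - 1 : ℝ) : EReal) < vb' b ξ := by
          by_contra hle
          push_neg at hle
          have h12 : (1 : EReal) + vb' b ξ ≤ 1 + ((x - 1 : ℝ) : EReal) := add_le_add_right hle 1
          have h13 : (1 : EReal) + ((x - 1 : ℝ) : EReal) = ((x : ℝ) : EReal) := by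
            rw [← EReal.coe_one, ← EReal.coe_add]
            norm_num
          rw [h13] at h12
          exact absurd (lt_of_lt_of_le hx2 h12) (lt_irrefl _)
        rw [vb'] at hx2'
        obtain ⟨_, ⟨u, hu, rfl⟩, hlt⟩ := lt_sSup_iff.mp hx2'
        have hux : x - 1 < u := by
          simp only [] at hlt
          exact_mod_cast hlt
        have hu1 : 1 < u := by
          have hx32 : (2 : ℝ) < x := by exact_mod_cast hx3
          linarith
        have hle := hkey u hu1 hu
        have hxu : ((x : ℝ) : EReal) < ((1 + u : ℝ) : EReal) := by
          exact_mod_cast (by linarith : x < 1 + u)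
        exact absurd (lt_trans hx1 (lt_of_lt_of_le hxu hle)) (lt_irrefl _)
  exact ⟨hA, hB, add_le_add_right (max_le_max hB le_rfl) 1, hD⟩
end

section
/- Let p > q ≥ 1 be positive integers with p/q > 1, and define a set S = ⋃_{h≥0} {p·p^h, (p+1)·p^h, ..., (qp)·p^h} of positive integers. Let (n_j)_{j≥0} be the increasing enumeration of S. Then limsup_{j→∞} n_{j+1}/n_j = p/q. -/
open Filter

/-- The set `⋃_{h ≥ 0} {p·p^h, (p+1)·p^h, …, (qp)·p^h}`. -/
def blockSet (p q : ℕ) : ℕ → Prop :=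
  fun n => ∃ h i : ℕ, p ≤ i ∧ i ≤ q * p ∧ n = i * p ^ h

section aux
variable (p q : ℕ)

/-- explicit enumeration -/
def bsF (j : ℕ) : ℕ := (p + j % (p * (q - 1) + 1)) * p ^ (j / (p * (q - 1) + 1))

variable {p q}

/-- The key step computation: `bsF` is strictly increasing, the ratio of consecutive
values is at most `p/q` (in crossmultiplied ℕ form), with equality at block boundaries. -/
lemma bsF_step (hq : 1 ≤ q) (hpq : q < p) (j : ℕ) :
    bsF p q j < bsF p q (j + 1) ∧ bsF p q (j + 1) * q ≤ bsF p q j * p ∧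
      (j % (p * (q - 1) + 1) = p * (q - 1) → bsF p q (j + 1) * q = bsF p q j * p) := by
  have hp2 : 2 ≤ p := by omega
  set m := p * (q - 1) + 1 with hm
  have hm0 : 0 < m := Nat.succ_pos _
  obtain ⟨d, r, hrm, rfl⟩ : ∃ d r, r < m ∧ j = m * d + r :=
    ⟨j / m, j % m, Nat.mod_lt _ hm0, (Nat.div_add_mod j m).symm⟩
  have e0 : (m * d + r) % m = r := by
    rw [Nat.add_comm, Nat.add_mul_mod_self_left, Nat.mod_eq_of_lt hrm]
  have e0' : (m * d + r) / m = d := by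
    rw [Nat.add_comm, Nat.add_mul_div_left _ _ hm0, Nat.div_eq_of_lt hrm, Nat.zero_add]
  have hpd : 0 < p ^ d := Nat.pow_pos (by omega)
  have hpm : p + (m - 1) = p * q := by
    obtain ⟨q', rfl⟩ : ∃ q', q = q' + 1 := ⟨q - 1, by omega⟩
    simp only [hm, Nat.add_sub_cancel]
    ring
  rcases lt_or_eq_of_le (Nat.succ_le_of_lt hrm) with hA | hB
  · -- within a block
    have h1 : (m * d + r + 1) % m = r + 1 := by
      rw [show m * d + r + 1 = (r + 1) + m * d by ring, Nat.add_mul_mod_self_left,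
        Nat.mod_eq_of_lt hA]
    have h2 : (m * d + r + 1) / m = d := by
      rw [show m * d + r + 1 = (r + 1) + m * d by ring, Nat.add_mul_div_left _ _ hm0,
        Nat.div_eq_of_lt hA, Nat.zero_add]
    simp only [bsF, ← hm, h1, h2, e0, e0']
    refine ⟨(Nat.mul_lt_mul_right hpd).2 (by omega), ?_, by omega⟩
    -- (p + r + 1) * p^d * q ≤ (p + r) * p^d * p
    have key : (p + (r + 1)) * q ≤ (p + r) * p := by nlinarith
    calc (p + (r + 1)) * p ^ d * q = ((p + (r + 1)) * q) * p ^ d := by ring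
      _ ≤ ((p + r) * p) * p ^ d := Nat.mul_le_mul_right _ key
      _ = (p + r) * p ^ d * p := by ring
  · -- block boundary
    have hstep : m * d + r + 1 = m * (d + 1) := by
      have : m * (d + 1) = m * d + m := by ring
      omega
    have h1 : (m * d + r + 1) % m = 0 := by rw [hstep, Nat.mul_mod_right]
    have h2 : (m * d + r + 1) / m = d + 1 := by rw [hstep, Nat.mul_div_cancel_left _ hm0]
    have hrq : p + r = p * q := by
      have : r = m - 1 := by omega
      rw [this]; exact hpm
    simp only [bsF, ← hm, h1, h2, e0, e0']
    rw [Nat.add_zero, hrq, pow_succ]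
    constructor
    · calc p * q * p ^ d < p * p * p ^ d := by
            refine (Nat.mul_lt_mul_right hpd).2 ?_
            exact Nat.mul_lt_mul_of_le_of_lt (le_refl p) hpq (by omega)
        _ = p * (p ^ d * p) := by ring
    · constructor
      · calc p * (p ^ d * p) * q = p * q * p ^ d * p := by ring
          _ ≤ p * q * p ^ d * p := le_rfl
      · intro _; ring

lemma bsF_strictMono (hq : 1 ≤ q) (hpq : q < p) : StrictMono (bsF p q) :=
  strictMono_nat_of_lt_succ fun j => (bsF_step hq hpq j).1

lemma bsF_range (hq : 1 ≤ q) (hpq : q < p) : Set.range (bsF p q) = setOf (blockSet p q) := by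
  have hp2 : 2 ≤ p := by omega
  set m := p * (q - 1) + 1 with hm
  have hm0 : 0 < m := Nat.succ_pos _
  have hpm : p + (m - 1) = p * q := by
    obtain ⟨q', rfl⟩ : ∃ q', q = q' + 1 := ⟨q - 1, by omega⟩
    simp only [hm, Nat.add_sub_cancel]
    ring
  ext n
  simp only [Set.mem_range, Set.mem_setOf_eq, blockSet]
  constructor
  · rintro ⟨j, rfl⟩
    refine ⟨j / m, p + j % m, Nat.le_add_right _ _, ?_, rfl⟩
    have : j % m < m := Nat.mod_lt _ hm0
    rw [Nat.mul_comm q p]; omega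
  · rintro ⟨h, i, hpi, hiq, rfl⟩
    refine ⟨(i - p) + m * h, ?_⟩
    have him : i - p < m := by rw [Nat.mul_comm q p] at hiq; omega
    unfold bsF
    rw [← hm, Nat.add_mul_mod_self_left, Nat.mod_eq_of_lt him,
      Nat.add_mul_div_left _ _ hm0, Nat.div_eq_of_lt him, Nat.zero_add]
    congr 1
    omega

lemma blockSet_nth_eq (hq : 1 ≤ q) (hpq : q < p) : Nat.nth (blockSet p q) = bsF p q := by
  have hinf : (setOf (blockSet p q)).Infinite := by
    rw [← bsF_range hq hpq]
    exact Set.infinite_range_of_injective (bsF_strictMono hq hpq).injective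
  refine ((Nat.nth_strictMono hinf).range_inj (bsF_strictMono hq hpq)).1 ?_
  rw [Nat.range_nth_of_infinite hinf, bsF_range hq hpq]
  rfl

end aux

lemma bsF_pos (hq : 1 ≤ q) (hpq : q < p) (j : ℕ) : 0 < bsF p q j := by
  have hp2 : 2 ≤ p := by omega
  exact Nat.mul_pos (by omega) (Nat.pow_pos (by omega))

/-- If `p > q ≥ 1`, and `(n_j)` is the increasing enumeration of
`⋃_{h ≥ 0} {p·p^h, …, (qp)·p^h}`, then `limsup n_{j+1}/n_j = p/q`. -/
theorem limsup_ratio_blockSet (p q : ℕ) (hq : 1 ≤ q) (hpq : q < p) :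
    limsup (fun j => (Nat.nth (blockSet p q) (j + 1) : ℝ) / (Nat.nth (blockSet p q) j : ℝ))
      atTop = (p : ℝ) / (q : ℝ) := by
  have hp2 : 2 ≤ p := by omega
  rw [blockSet_nth_eq hq hpq]
  set u : ℕ → ℝ := fun j => (bsF p q (j + 1) : ℝ) / (bsF p q j : ℝ) with hu
  have hq0 : (0 : ℝ) < (q : ℝ) := by exact_mod_cast hq
  have hpos : ∀ j, (0 : ℝ) < (bsF p q j : ℝ) := fun j => by
    exact_mod_cast bsF_pos hq hpq j
  have hle : ∀ j, u j ≤ (p : ℝ) / (q : ℝ) := by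
    intro j
    rw [hu, div_le_div_iff₀ (hpos j) hq0]
    have h := (bsF_step hq hpq j).2.1
    calc (bsF p q (j + 1) : ℝ) * q = ((bsF p q (j + 1) * q : ℕ) : ℝ) := by push_cast; ring
      _ ≤ ((bsF p q j * p : ℕ) : ℝ) := Nat.cast_le.2 h
      _ = (p : ℝ) * (bsF p q j : ℝ) := by push_cast; ring
  have hnn : ∀ j, (0 : ℝ) ≤ u j := fun j => div_nonneg (hpos _).le (hpos _).le
  have heq : ∀ j, j % (p * (q - 1) + 1) = p * (q - 1) → u j = (p : ℝ) / (q : ℝ) := by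
    intro j hj
    rw [hu, div_eq_div_iff (hpos j).ne' hq0.ne']
    have h := (bsF_step hq hpq j).2.2 hj
    calc (bsF p q (j + 1) : ℝ) * q = ((bsF p q (j + 1) * q : ℕ) : ℝ) := by push_cast; ring
      _ = ((bsF p q j * p : ℕ) : ℝ) := Nat.cast_inj.2 h
      _ = (p : ℝ) * (bsF p q j : ℝ) := by push_cast; ring
  have hfreq : ∃ᶠ j in atTop, (p : ℝ) / (q : ℝ) ≤ u j := by
    rw [frequently_atTop]
    intro a
    set m := p * (q - 1) + 1 with hm
    refine ⟨a * m + p * (q - 1), ?_, ?_⟩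
    · have : a * 1 ≤ a * m := Nat.mul_le_mul_left a (by omega)
      omega
    · refine le_of_eq (heq _ ?_).symm
      rw [show a * m + p * (q - 1) = p * (q - 1) + m * a by ring, Nat.add_mul_mod_self_left,
        Nat.mod_eq_of_lt (by omega)]
  refine le_antisymm ?_ ?_
  · exact limsup_le_of_le (isCoboundedUnder_le_of_le atTop hnn)
      (Eventually.of_forall hle)
  · exact le_limsup_of_frequently_le hfreq (isBoundedUnder_of ⟨_, hle⟩)
end

section
/- Let b ≥ 2 be an integer, let h ≥ 2 be an integer, and define ξ = Σ_{j≥0} b^{−x_j} where x_0 = 1 and x_{j+1} = h·x_j (so x_j = h^j). Then v_b(ξ) = h − 1, where v_b(ξ) is the supremum of real numbers v such that ‖b^n ξ‖ < (b^n)^{−v} has infinitely many solutions in positive integers n. -/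
open Filter Set

set_option maxHeartbeats 1000000

namespace VbAux

/-- tail sum `∑_{j≥0} b^(n - h^(j+m))`. -/
noncomputable def tail (b h : ℕ) (n : ℤ) (m : ℕ) : ℝ :=
  ∑' j : ℕ, (b : ℝ) ^ (n - (h : ℤ) ^ (j + m))

variable {b h : ℕ}

lemma exp_le (hh : 2 ≤ h) (m j : ℕ) : (h : ℤ) ^ m + j ≤ (h : ℤ) ^ (j + m) := by
  have h1 : (j : ℤ) < (h : ℤ) ^ j := by exact_mod_cast Nat.lt_pow_self (n := j) (by omega)
  have h2 : (1 : ℤ) ≤ (h : ℤ) ^ m := one_le_pow₀ (by omega)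
  rw [pow_add]
  nlinarith

lemma term_le (hb : 2 ≤ b) (hh : 2 ≤ h) (n : ℤ) (m j : ℕ) :
    (b : ℝ) ^ (n - (h : ℤ) ^ (j + m)) ≤ (b : ℝ) ^ (n - (h : ℤ) ^ m) * ((b : ℝ)⁻¹) ^ j := by
  have hb1 : (1 : ℝ) ≤ (b : ℝ) := by exact_mod_cast (by omega : 1 ≤ b)
  have hb0 : (b : ℝ) ≠ 0 := by positivity
  have h1 : (b : ℝ) ^ (n - (h : ℤ) ^ (j + m)) ≤ (b : ℝ) ^ (n - (h : ℤ) ^ m - j) := by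
    apply zpow_le_zpow_right₀ hb1
    have := exp_le hh m j
    omega
  refine h1.trans_eq ?_
  rw [zpow_sub₀ hb0, zpow_natCast, div_eq_mul_inv, inv_pow]

lemma summable_tail (hb : 2 ≤ b) (hh : 2 ≤ h) (n : ℤ) (m : ℕ) :
    Summable (fun j : ℕ => (b : ℝ) ^ (n - (h : ℤ) ^ (j + m))) := by
  have hb1 : (1 : ℝ) < (b : ℝ) := by exact_mod_cast (by omega : 1 < b)
  apply Summable.of_nonneg_of_le (fun j => by positivity) (term_le hb hh n m)
  exact (summable_geometric_of_lt_one (by positivity)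
    (inv_lt_one_of_one_lt₀ hb1)).mul_left _

lemma tail_le (hb : 2 ≤ b) (hh : 2 ≤ h) (n : ℤ) (m : ℕ) :
    tail b h n m ≤ 2 * (b : ℝ) ^ (n - (h : ℤ) ^ m) := by
  have hb1 : (1 : ℝ) < (b : ℝ) := by exact_mod_cast (by omega : 1 < b)
  have hge : Summable (fun j : ℕ => (b : ℝ) ^ (n - (h : ℤ) ^ m) * ((b : ℝ)⁻¹) ^ j) :=
    (summable_geometric_of_lt_one (by positivity) (inv_lt_one_of_one_lt₀ hb1)).mul_left _
  have h1 : tail b h n m ≤ ∑' j : ℕ, (b : ℝ) ^ (n - (h : ℤ) ^ m) * ((b : ℝ)⁻¹) ^ j :=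
    Summable.tsum_le_tsum (term_le hb hh n m) (summable_tail hb hh n m) hge
  rw [tsum_mul_left, tsum_geometric_of_lt_one (by positivity) (inv_lt_one_of_one_lt₀ hb1)] at h1
  have hb2 : (b : ℝ)⁻¹ ≤ 1/2 := by
    rw [inv_eq_one_div, div_le_div_iff₀ (by positivity) (by norm_num)]
    have : (2:ℝ) ≤ (b:ℝ) := by exact_mod_cast hb
    linarith
  have h3 : (1 - (b : ℝ)⁻¹)⁻¹ ≤ 2 := by
    rw [inv_le_comm₀ (by linarith) (by norm_num)]
    linarith
  have h4 : (0 : ℝ) < (b : ℝ) ^ (n - (h : ℤ) ^ m) := by positivity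
  nlinarith

lemma tail_succ (hb : 2 ≤ b) (hh : 2 ≤ h) (n : ℤ) (m : ℕ) :
    tail b h n m = (b : ℝ) ^ (n - (h : ℤ) ^ m) + tail b h n (m + 1) := by
  rw [tail, Summable.tsum_eq_zero_add (summable_tail hb hh n m)]
  congr 1
  · norm_num
  · apply tsum_congr; intro j
    have : j + 1 + m = j + (m + 1) := by omega
    rw [this]

lemma tail_pos (hb : 2 ≤ b) (hh : 2 ≤ h) (n : ℤ) (m : ℕ) : 0 < tail b h n m := by
  have : (0:ℝ) < (b : ℝ) ^ (n - (h : ℤ) ^ (0 + m)) := by positivity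
  exact Summable.tsum_pos (summable_tail hb hh n m) (fun j => by positivity) 0 this

lemma tail_gt (hb : 2 ≤ b) (hh : 2 ≤ h) (n : ℤ) (m : ℕ) :
    (b : ℝ) ^ (n - (h : ℤ) ^ m) < tail b h n m := by
  rw [tail_succ hb hh n m]
  linarith [tail_pos hb hh n (m + 1)]

lemma split (hb : 2 ≤ b) (hh : 2 ≤ h) (n m : ℕ) (hm : ∀ j < m, h ^ j ≤ n) :
    (b : ℝ) ^ n * (∑' j : ℕ, ((b : ℝ) ^ (h ^ j))⁻¹)
      = ((∑ j ∈ Finset.range m, b ^ (n - h ^ j) : ℕ) : ℝ) + tail b h (n : ℤ) m := by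
  have hb0 : (b : ℝ) ≠ 0 := by positivity
  have h1 : (b : ℝ) ^ n * (∑' j : ℕ, ((b : ℝ) ^ (h ^ j))⁻¹)
      = ∑' j : ℕ, (b : ℝ) ^ ((n : ℤ) - (h : ℤ) ^ j) := by
    rw [← tsum_mul_left]
    apply tsum_congr; intro j
    rw [← zpow_natCast (b : ℝ) n, ← zpow_natCast (b : ℝ) (h ^ j), ← zpow_neg,
      ← zpow_add₀ hb0]
    congr 1
  have hs : Summable (fun j : ℕ => (b : ℝ) ^ ((n : ℤ) - (h : ℤ) ^ j)) := by
    have := summable_tail hb hh (n : ℤ) 0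
    simpa using this
  rw [h1, ← Summable.sum_add_tsum_nat_add m hs]
  · congr 1
    rw [Nat.cast_sum]
    apply Finset.sum_congr rfl
    intro j hj
    have hle := hm j (Finset.mem_range.mp hj)
    have h2 : ((b ^ (n - h ^ j) : ℕ) : ℝ) = (b : ℝ) ^ ((n - h ^ j : ℕ) : ℤ) := by
      push_cast
      rw [zpow_natCast]
    rw [h2]
    congr 1
    push_cast [Nat.cast_sub hle]
    ring

lemma dist_nat_add (N : ℕ) (F : ℝ) :
    distNearestInt ((N : ℝ) + F) = |F - round F| := by
  rw [distNearestInt, round_natCast_add]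
  congr 1
  push_cast
  ring

end VbAux

open VbAux in
/-- For `b ≥ 2`, `h ≥ 2` and `ξ = ∑_{j ≥ 0} b^{-h^j}`, one has `v_b(ξ) = h - 1`. -/
theorem vb_of_geometric_lacunary (b : ℕ) (hb : 2 ≤ b) (h : ℕ) (hh : 2 ≤ h) :
    vb b (∑' j : ℕ, ((b : ℝ) ^ (h ^ j))⁻¹) = (h : EReal) - 1 := by
  set ξ := ∑' j : ℕ, ((b : ℝ) ^ (h ^ j))⁻¹ with hξ
  have hbR : (1 : ℝ) < (b : ℝ) := by exact_mod_cast (by omega : 1 < b)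
  have hhR : (2 : ℝ) ≤ (h : ℝ) := by exact_mod_cast hh
  -- UPPER BOUND
  have upper : ∀ v : ℝ,
      {n : ℕ | 0 < n ∧ distNearestInt ((b : ℝ) ^ n * ξ) < ((b : ℝ) ^ n) ^ (-v)}.Infinite →
      v ≤ (h : ℝ) - 1 := by
    intro v hv
    by_contra hv'
    push_neg at hv'
    obtain ⟨n, hn, hngt⟩ := hv.exists_gt 2
    obtain ⟨hn0, hdist⟩ := hn
    set J := Nat.log h n with hJ
    have hJ1 : h ^ J ≤ n := Nat.pow_log_le_self h (by omega)
    have hJ2 : n < h ^ (J + 1) := Nat.lt_pow_succ_log_self (by omega) n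
    have hN := split hb hh n (J + 1)
      (fun j hj => le_trans (Nat.pow_le_pow_right (by omega) (by omega)) hJ1)
    set F := tail b h (n : ℤ) (J + 1) with hFdef
    have hF0 : 0 < F := tail_pos hb hh _ _
    have hFgt : (b : ℝ) ^ ((n : ℤ) - (h : ℤ) ^ (J + 1)) < F := tail_gt hb hh _ _
    have hsucc : F = (b : ℝ) ^ ((n : ℤ) - (h : ℤ) ^ (J + 1)) + tail b h (n : ℤ) (J + 2) :=
      tail_succ hb hh _ _
    have hT2 : tail b h (n : ℤ) (J + 2) ≤ 2 * (b : ℝ) ^ ((n : ℤ) - (h : ℤ) ^ (J + 2)) :=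
      tail_le hb hh _ _
    have hcast2 : ((h ^ (J + 1) : ℕ) : ℤ) = (h : ℤ) ^ (J + 1) := by push_cast; ring
    have he1 : (n : ℤ) - (h : ℤ) ^ (J + 1) ≤ -1 := by
      have : (n : ℤ) < (h : ℤ) ^ (J + 1) := by rw [← hcast2]; exact_mod_cast hJ2
      omega
    have hpow2 : (2 : ℤ) ≤ (h : ℤ) ^ (J + 1) := by
      calc (2 : ℤ) ≤ (h : ℤ) := by exact_mod_cast hh
      _ ≤ (h : ℤ) ^ (J + 1) := le_self_pow₀ (by omega) (by omega)
    have he2 : (n : ℤ) - (h : ℤ) ^ (J + 2) ≤ -3 := by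
      have h1 : (h : ℤ) ^ (J + 2) = (h : ℤ) * (h : ℤ) ^ (J + 1) := by ring
      have h2 : (2 : ℤ) ≤ (h : ℤ) := by exact_mod_cast hh
      nlinarith
    have hb2 : (2 : ℝ) ≤ (b : ℝ) := by exact_mod_cast hb
    have hbm1 : (b : ℝ) ^ (-1 : ℤ) ≤ 1 / 2 := by
      rw [zpow_neg_one, inv_le_comm₀ (by positivity) (by norm_num)]
      norm_num
      linarith
    have hbm3 : (b : ℝ) ^ (-3 : ℤ) ≤ 1 / 8 := by
      rw [show ((-3 : ℤ)) = -(3 : ℕ) from rfl, zpow_neg, zpow_natCast,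
        inv_le_comm₀ (by positivity) (by norm_num)]
      norm_num
      have := pow_le_pow_left₀ (by norm_num : (0:ℝ) ≤ 2) hb2 3
      norm_num at this
      linarith
    have hq1 : (b : ℝ) ^ ((n : ℤ) - (h : ℤ) ^ (J + 1)) ≤ 1 / 2 :=
      (zpow_le_zpow_right₀ hbR.le he1).trans hbm1
    have hq2 : (b : ℝ) ^ ((n : ℤ) - (h : ℤ) ^ (J + 2)) ≤ 1 / 8 :=
      (zpow_le_zpow_right₀ hbR.le he2).trans hbm3
    have hFub : (1 : ℝ) / 4 ≤ 1 - F := by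
      rw [hsucc]; nlinarith
    have hrw : distNearestInt ((b : ℝ) ^ n * ξ) = |F - round F| := by
      rw [hN]; exact dist_nat_add _ F
    rw [hrw] at hdist
    rcases le_or_gt (round F) 0 with hr | hr
    · have h5 : F ≤ |F - round F| := by
        have hr' : ((round F : ℝ)) ≤ 0 := by exact_mod_cast hr
        calc F ≤ F - round F := by linarith
        _ ≤ |F - round F| := le_abs_self _
      have h6 : ((b : ℝ) ^ n) ^ (-v) ≤ (b : ℝ) ^ ((n : ℤ) - (h : ℤ) ^ (J + 1)) := by
        rw [← Real.rpow_natCast (b : ℝ) n, ← Real.rpow_intCast (b : ℝ) ((n : ℤ) - (h : ℤ) ^ (J + 1)),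
          ← Real.rpow_mul (by positivity)]
        apply Real.rpow_le_rpow_of_exponent_le hbR.le
        push_cast
        have hh1 : (h : ℝ) ^ (J + 1) ≤ (h : ℝ) * n := by
          have hJn : (h : ℝ) ^ J ≤ n := by exact_mod_cast hJ1
          calc (h : ℝ) ^ (J + 1) = h * h ^ J := by ring
          _ ≤ (h : ℝ) * n := by nlinarith
        have hn' : (0 : ℝ) ≤ (n : ℝ) := by positivity
        nlinarith
      linarith [h5.trans_lt (hdist.trans_le h6)]
    · have h5 : 1 - F ≤ |F - round F| := by
        have hr' : (1 : ℝ) ≤ (round F : ℝ) := by exact_mod_cast hr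
        rw [abs_sub_comm]
        calc 1 - F ≤ round F - F := by linarith
        _ ≤ |(round F : ℝ) - F| := le_abs_self _
      have hbn1 : (1 : ℝ) ≤ (b : ℝ) ^ n := one_le_pow₀ hbR.le
      have h6 : ((b : ℝ) ^ n) ^ (-v) ≤ ((b : ℝ) ^ n)⁻¹ := by
        rw [← Real.rpow_neg_one ((b : ℝ) ^ n)]
        apply Real.rpow_le_rpow_of_exponent_le hbn1
        linarith
      have h7 : ((b : ℝ) ^ n)⁻¹ ≤ 1 / 8 := by
        rw [inv_le_comm₀ (by positivity) (by norm_num)]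
        norm_num
        calc (8 : ℝ) = 2 ^ 3 := by norm_num
        _ ≤ (b : ℝ) ^ 3 := pow_le_pow_left₀ (by norm_num) hb2 3
        _ ≤ (b : ℝ) ^ n := pow_le_pow_right₀ hbR.le (by omega)
      linarith [h5.trans_lt (hdist.trans_le (h6.trans h7))]
  -- LOWER BOUND
  have lower : ∀ v : ℝ, v < (h : ℝ) - 1 →
      {n : ℕ | 0 < n ∧ distNearestInt ((b : ℝ) ^ n * ξ) < ((b : ℝ) ^ n) ^ (-v)}.Infinite := by
    intro v hv
    apply Set.infinite_of_forall_exists_gt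
    intro a
    set δ := (h : ℝ) - 1 - v with hδ
    have hδ0 : 0 < δ := by simp only [hδ]; linarith
    set J := max (a + 1) (max 2 (⌈1 / δ⌉₊ + 1)) with hJdef
    set n := h ^ J with hn
    have hJa : a + 1 ≤ J := le_max_left _ _
    have hJ2 : 2 ≤ J := le_trans (le_max_left _ _) (le_max_right _ _)
    have hJc : ⌈1 / δ⌉₊ + 1 ≤ J := le_trans (le_max_right _ _) (le_max_right _ _)
    have hnJ : J < n := Nat.lt_pow_self (n := J) (by omega)
    refine ⟨n, ⟨?_, ?_⟩, by omega⟩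
    · exact Nat.pow_pos (n := J) (by omega)
    · have hN := split hb hh n (J + 1)
        (fun j hj => Nat.pow_le_pow_right (by omega) (by omega))
      set F := tail b h (n : ℤ) (J + 1) with hFdef
      have hF0 : 0 < F := tail_pos hb hh _ _
      have hFle : F ≤ 2 * (b : ℝ) ^ ((n : ℤ) - (h : ℤ) ^ (J + 1)) := tail_le hb hh _ _
      have hcastn : (n : ℤ) = (h : ℤ) ^ J := by rw [hn]; push_cast; ring
      have hexp : (n : ℤ) - (h : ℤ) ^ (J + 1) = -(((h : ℤ) - 1) * n) := by
        rw [hcastn, pow_succ]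
        ring
      have hn4 : (4 : ℤ) ≤ (n : ℤ) := by
        have : 2 ^ 2 ≤ h ^ J := Nat.pow_le_pow_left hh 2 |>.trans (Nat.pow_le_pow_right (by omega) hJ2)
        exact_mod_cast this
      have hkey : (n : ℤ) - (h : ℤ) ^ (J + 1) ≤ -4 := by
        rw [hexp]
        have h2 : (2 : ℤ) ≤ (h : ℤ) := by exact_mod_cast hh
        nlinarith
      have hb2 : (2 : ℝ) ≤ (b : ℝ) := by exact_mod_cast hb
      have hbm4 : (b : ℝ) ^ (-4 : ℤ) ≤ 1 / 16 := by
        rw [show ((-4 : ℤ)) = -(4 : ℕ) from rfl, zpow_neg, zpow_natCast,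
          inv_le_comm₀ (by positivity) (by norm_num)]
        norm_num
        have := pow_le_pow_left₀ (by norm_num : (0:ℝ) ≤ 2) hb2 4
        norm_num at this
        linarith
      have hsmall : F ≤ 1 / 8 := by
        have h1 : (b : ℝ) ^ ((n : ℤ) - (h : ℤ) ^ (J + 1)) ≤ (b : ℝ) ^ (-4 : ℤ) :=
          zpow_le_zpow_right₀ hbR.le hkey
        linarith
      have hround : round F = 0 := by
        rw [round_eq_zero_iff]
        constructor <;> [linarith; linarith]
      have hdisteq : distNearestInt ((b : ℝ) ^ n * ξ) = F := by
        rw [hN, dist_nat_add, hround, Int.cast_zero, sub_zero, abs_of_pos hF0]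
      rw [hdisteq]
      -- show F < (b^n)^(-v)
      have hδn : (1 : ℝ) < δ * n := by
        have hc : (1 / δ : ℝ) ≤ (⌈1 / δ⌉₊ : ℝ) := Nat.le_ceil _
        have hJn : (⌈1 / δ⌉₊ + 1 : ℝ) ≤ (n : ℝ) := by
          have : ⌈1 / δ⌉₊ + 1 ≤ n := by omega
          exact_mod_cast this
        have h1 : (1 / δ : ℝ) < n := by linarith
        calc (1 : ℝ) = δ * (1 / δ) := by field_simp
        _ < δ * n := by exact mul_lt_mul_of_pos_left h1 hδ0
      have h2lt : (2 : ℝ) < (b : ℝ) ^ (δ * (n : ℝ)) := by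
        calc (2 : ℝ) = (2 : ℝ) ^ (1 : ℝ) := (Real.rpow_one 2).symm
        _ < (2 : ℝ) ^ (δ * (n : ℝ)) := Real.rpow_lt_rpow_of_exponent_lt one_lt_two hδn
        _ ≤ (b : ℝ) ^ (δ * (n : ℝ)) := Real.rpow_le_rpow (by norm_num)
            (by exact_mod_cast hb) (by nlinarith)
      have hfinal : 2 * (b : ℝ) ^ ((n : ℤ) - (h : ℤ) ^ (J + 1)) < ((b : ℝ) ^ n) ^ (-v) := by
        have e1 : (b : ℝ) ^ ((n : ℤ) - (h : ℤ) ^ (J + 1))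
            = (b : ℝ) ^ ((((n : ℤ) - (h : ℤ) ^ (J + 1) : ℤ) : ℝ)) :=
          (Real.rpow_intCast (b : ℝ) _).symm
        have e2 : ((b : ℝ) ^ n) ^ (-v) = (b : ℝ) ^ ((n : ℝ) * (-v)) := by
          rw [← Real.rpow_natCast (b : ℝ) n, ← Real.rpow_mul (by positivity)]
        have e3 : (n : ℝ) * (-v) = δ * (n : ℝ) + (((n : ℤ) - (h : ℤ) ^ (J + 1) : ℤ) : ℝ) := by
          rw [hexp]
          push_cast
          rw [hδ]
          ring
        rw [e1, e2, e3, Real.rpow_add (by positivity)]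
        have hpos : (0 : ℝ) < (b : ℝ) ^ ((((n : ℤ) - (h : ℤ) ^ (J + 1) : ℤ) : ℝ)) := by positivity
        exact mul_lt_mul_of_pos_right h2lt hpos
      exact lt_of_le_of_lt hFle hfinal
  -- CONCLUDE
  have hE : ((h : EReal) - 1) = (((h : ℝ) - 1 : ℝ) : EReal) := by
    rw [EReal.coe_sub, EReal.coe_one, EReal.coe_coe_eq_natCast]
  rw [vb, hE]
  apply le_antisymm
  · apply sSup_le
    rintro x ⟨v, hv, rfl⟩
    exact EReal.coe_le_coe_iff.mpr (upper v hv)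
  · by_contra hc
    push_neg at hc
    obtain ⟨z, hz1, hz2⟩ := EReal.exists_between_coe_real hc
    have hz3 : z < (h : ℝ) - 1 := by exact_mod_cast hz2
    have hzmem : (z : EReal) ∈ (fun v : ℝ => (v : EReal)) ''
        {v : ℝ | {n : ℕ | 0 < n ∧
          distNearestInt ((b : ℝ) ^ n * ξ) < ((b : ℝ) ^ n) ^ (-v)}.Infinite} :=
      Set.mem_image_of_mem _ (lower z hz3)
    exact absurd (le_sSup hzmem) (not_le.mpr hz1)
end
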